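/- arXiv:2301.06283 — 3 statements merged into one kernel-verified Lean document; each statement's English description precedes it below -/
import Mathlib

section
/- Let Y_1, ..., Y_n be independent mean-zero random variables that are uniformly sub-Gaussian: max_i c1^2 E[exp(Y_i^2/c1^2) - 1] ≤ c2^2 for constants c1, c2. Then for any t > 0, P(|n^{-1} Σ_i Y_i| > t) ≤ 2 exp(-n t^2 / (8 (c1^2 + c2^2))). -/
open MeasureTheory ProbabilityTheory

private lemma exp_smul_le' (θ u : ℝ) (h0 : 0 ≤ θ) (h1 : θ ≤ 1) :
    Real.exp (θ * u) ≤ 1 - θ + θ * Real.exp u := by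
  have h := convexOn_exp.2 (Set.mem_univ (0:ℝ)) (Set.mem_univ u)
    (by linarith : (0:ℝ) ≤ 1 - θ) h0 (by ring)
  simpa using h

private lemma exp_le_add_exp_sq' (x : ℝ) : Real.exp x ≤ x + Real.exp (x ^ 2) := by
  have hsq : 1 + x ^ 2 ≤ Real.exp (x ^ 2) := by
    linarith [Real.add_one_le_exp (x ^ 2)]
  rcases le_or_gt |x| 1 with h | h
  · have hb := Real.exp_bound h (by norm_num : 0 < 2)
    simp [Finset.sum_range_succ] at hb
    have h1 := (abs_sub_le_iff.1 hb).1
    nlinarith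
  · have hx2 : x ≤ x ^ 2 := by
      rcases le_or_gt 0 x with hx | hx
      · rw [abs_of_nonneg hx] at h; nlinarith
      · nlinarith
    rcases le_or_gt 0 x with hx | hx
    · have := Real.exp_le_exp.2 hx2
      linarith
    · have h1 : Real.exp x ≤ 1 := Real.exp_le_one_iff.2 hx.le
      nlinarith [sq_abs x, abs_nonneg x, neg_abs_le x]

set_option maxHeartbeats 1000000 in
/-- Sub-Gaussian concentration: for independent mean-zero uniformly sub-Gaussian `Y i`,
`P(|n⁻¹ ∑ Y i| > t) ≤ 2 exp(-n t² / (8 (c1² + c2²)))`. -/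
theorem stmt6 {Ω : Type*} [MeasurableSpace Ω] (μ : Measure Ω) [IsProbabilityMeasure μ]
    {n : ℕ} (hn : 0 < n) (Y : Fin n → Ω → ℝ) (c1 c2 t : ℝ) (hc1 : 0 < c1) (hc2 : 0 < c2)
    (ht : 0 < t)
    (hmeas : ∀ i, Measurable (Y i))
    (hindep : iIndepFun Y μ)
    (hmean : ∀ i, ∫ ω, Y i ω ∂μ = 0)
    (hintexp : ∀ i, Integrable (fun ω => Real.exp ((Y i ω) ^ 2 / c1 ^ 2)) μ)
    (hsub : ∀ i, c1 ^ 2 * ((∫ ω, Real.exp ((Y i ω) ^ 2 / c1 ^ 2) ∂μ) - 1) ≤ c2 ^ 2) :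
    μ {ω | t < |(n : ℝ)⁻¹ * ∑ i, Y i ω|} ≤
      ENNReal.ofReal (2 * Real.exp (-(n * t ^ 2) / (8 * (c1 ^ 2 + c2 ^ 2)))) := by
  set K : ℝ := c1 ^ 2 + c2 ^ 2 with hK
  have hKpos : 0 < K := by positivity
  have hc1sq : (0:ℝ) < c1 ^ 2 := by positivity
  have hnR : (0:ℝ) < n := Nat.cast_pos.2 hn
  -- AM-GM pointwise bound
  have key : ∀ l y : ℝ, l * y ≤ l ^ 2 * c1 ^ 2 / 2 + (1/2) * (y ^ 2 / c1 ^ 2) := by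
    intro l y
    have h1 : y ^ 2 / c1 ^ 2 * c1 ^ 2 = y ^ 2 := div_mul_cancel₀ _ hc1sq.ne'
    nlinarith [sq_nonneg (l * c1 ^ 2 - y), hc1sq, div_nonneg (sq_nonneg y) hc1sq.le]
  -- integrability of exp(l * Y i)
  have hInt : ∀ (l : ℝ) (i : Fin n), Integrable (fun ω => Real.exp (l * Y i ω)) μ := by
    intro l i
    refine Integrable.mono' ((hintexp i).const_mul (Real.exp (l ^ 2 * c1 ^ 2 / 2)))
      (((hmeas i).const_mul l).exp.aestronglyMeasurable) (ae_of_all _ fun ω => ?_)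
    rw [Real.norm_eq_abs, abs_of_pos (Real.exp_pos _), ← Real.exp_add]
    apply Real.exp_le_exp.2
    have := key l (Y i ω)
    have hy : (0:ℝ) ≤ (Y i ω) ^ 2 / c1 ^ 2 := by positivity
    linarith
  -- integrability of Y i
  have hYint : ∀ i, Integrable (Y i) μ := by
    intro i
    refine Integrable.mono' ((hintexp i).const_mul c1)
      (hmeas i).aestronglyMeasurable (ae_of_all _ fun ω => ?_)
    rw [Real.norm_eq_abs]
    have h1 : 1 + (Y i ω) ^ 2 / c1 ^ 2 ≤ Real.exp ((Y i ω) ^ 2 / c1 ^ 2) := by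
      linarith [Real.add_one_le_exp ((Y i ω) ^ 2 / c1 ^ 2)]
    have h2 : |Y i ω| / c1 ≤ 1 + (Y i ω) ^ 2 / c1 ^ 2 := by
      rw [div_le_iff₀ hc1]
      nlinarith [div_mul_cancel₀ ((Y i ω) ^ 2) hc1sq.ne', sq_nonneg (|Y i ω| - c1),
        sq_abs (Y i ω), hc1, div_nonneg (sq_nonneg (Y i ω)) hc1sq.le]
    calc |Y i ω| = c1 * (|Y i ω| / c1) := by field_simp
    _ ≤ c1 * Real.exp ((Y i ω) ^ 2 / c1 ^ 2) := by
        apply mul_le_mul_of_nonneg_left (h2.trans h1) hc1.le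
  -- mgf bound A : for l^2 c1^2 ≤ 1
  have hA : ∀ (l : ℝ), l ^ 2 * c1 ^ 2 ≤ 1 → ∀ i, mgf (Y i) μ l ≤ Real.exp (l ^ 2 * K) := by
    intro l hl i
    have hθ0 : (0:ℝ) ≤ l ^ 2 * c1 ^ 2 := by positivity
    have hgc : Integrable (fun ω => l ^ 2 * c1 ^ 2 * Real.exp ((Y i ω) ^ 2 / c1 ^ 2)) μ :=
      (hintexp i).const_mul _
    have hg2 : Integrable (fun ω => (1 - l ^ 2 * c1 ^ 2) +
        l ^ 2 * c1 ^ 2 * Real.exp ((Y i ω) ^ 2 / c1 ^ 2)) μ := (integrable_const _).add hgc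
    have hrhs : Integrable (fun ω => l * Y i ω + ((1 - l ^ 2 * c1 ^ 2) +
        l ^ 2 * c1 ^ 2 * Real.exp ((Y i ω) ^ 2 / c1 ^ 2))) μ :=
      ((hYint i).const_mul l).add hg2
    have pt : ∀ ω, Real.exp (l * Y i ω) ≤ l * Y i ω +
        ((1 - l ^ 2 * c1 ^ 2) + l ^ 2 * c1 ^ 2 * Real.exp ((Y i ω) ^ 2 / c1 ^ 2)) := by
      intro ω
      refine (exp_le_add_exp_sq' _).trans ?_
      have h2 : (l * Y i ω) ^ 2 = l ^ 2 * c1 ^ 2 * ((Y i ω) ^ 2 / c1 ^ 2) := by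
        field_simp
      rw [h2]
      have := exp_smul_le' (l ^ 2 * c1 ^ 2) ((Y i ω) ^ 2 / c1 ^ 2) hθ0 hl
      linarith
    have hstep : mgf (Y i) μ l ≤ 1 - l ^ 2 * c1 ^ 2 +
        l ^ 2 * c1 ^ 2 * (∫ ω, Real.exp ((Y i ω) ^ 2 / c1 ^ 2) ∂μ) := by
      rw [mgf]
      calc (∫ ω, Real.exp (l * Y i ω) ∂μ) ≤ ∫ ω, (l * Y i ω +
          ((1 - l ^ 2 * c1 ^ 2) + l ^ 2 * c1 ^ 2 * Real.exp ((Y i ω) ^ 2 / c1 ^ 2))) ∂μ :=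
        integral_mono (hInt l i) hrhs pt
      _ = 1 - l ^ 2 * c1 ^ 2 + l ^ 2 * c1 ^ 2 * (∫ ω, Real.exp ((Y i ω) ^ 2 / c1 ^ 2) ∂μ) := by
        rw [integral_add ((hYint i).const_mul l) hg2, integral_add (integrable_const _) hgc,
          integral_const_mul, integral_const_mul, hmean i]
        simp
    have hm := mul_le_mul_of_nonneg_left (hsub i) (sq_nonneg l)
    have h2 : 1 + l ^ 2 * c2 ^ 2 ≤ Real.exp (l ^ 2 * c2 ^ 2) := by
      linarith [Real.add_one_le_exp (l ^ 2 * c2 ^ 2)]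
    have h3 : Real.exp (l ^ 2 * c2 ^ 2) ≤ Real.exp (l ^ 2 * K) := by
      apply Real.exp_le_exp.2; rw [hK]; nlinarith [sq_nonneg l, sq_nonneg c1]
    nlinarith [hstep]
  -- mgf bound B : all l
  have hB : ∀ (l : ℝ) (i : Fin n),
      mgf (Y i) μ l ≤ Real.exp (l ^ 2 * c1 ^ 2 / 2 + c2 ^ 2 / (2 * c1 ^ 2)) := by
    intro l i
    have pt : ∀ ω, Real.exp (l * Y i ω) ≤ Real.exp (l ^ 2 * c1 ^ 2 / 2) *
        (1/2 + 1/2 * Real.exp ((Y i ω) ^ 2 / c1 ^ 2)) := by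
      intro ω
      have h1 : Real.exp (l * Y i ω) ≤
          Real.exp (l ^ 2 * c1 ^ 2 / 2) * Real.exp ((1/2) * ((Y i ω) ^ 2 / c1 ^ 2)) := by
        rw [← Real.exp_add]; exact Real.exp_le_exp.2 (key l (Y i ω))
      have h2 := exp_smul_le' (1/2) ((Y i ω) ^ 2 / c1 ^ 2) (by norm_num) (by norm_num)
      calc Real.exp (l * Y i ω) ≤
          Real.exp (l ^ 2 * c1 ^ 2 / 2) * Real.exp ((1/2) * ((Y i ω) ^ 2 / c1 ^ 2)) := h1
      _ ≤ Real.exp (l ^ 2 * c1 ^ 2 / 2) * (1/2 + 1/2 * Real.exp ((Y i ω) ^ 2 / c1 ^ 2)) := by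
          apply mul_le_mul_of_nonneg_left _ (Real.exp_pos _).le
          linarith
    have hgc : Integrable (fun ω => (1:ℝ)/2 * Real.exp ((Y i ω) ^ 2 / c1 ^ 2)) μ :=
      (hintexp i).const_mul _
    have hg2 : Integrable (fun ω => (1:ℝ)/2 + 1/2 * Real.exp ((Y i ω) ^ 2 / c1 ^ 2)) μ :=
      (integrable_const _).add hgc
    have hrhs : Integrable (fun ω => Real.exp (l ^ 2 * c1 ^ 2 / 2) *
        (1/2 + 1/2 * Real.exp ((Y i ω) ^ 2 / c1 ^ 2))) μ := hg2.const_mul _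
    have hstep : mgf (Y i) μ l ≤ Real.exp (l ^ 2 * c1 ^ 2 / 2) *
        (1/2 + 1/2 * (∫ ω, Real.exp ((Y i ω) ^ 2 / c1 ^ 2) ∂μ)) := by
      rw [mgf]
      calc (∫ ω, Real.exp (l * Y i ω) ∂μ) ≤ ∫ ω, (Real.exp (l ^ 2 * c1 ^ 2 / 2) *
          (1/2 + 1/2 * Real.exp ((Y i ω) ^ 2 / c1 ^ 2))) ∂μ :=
        integral_mono (hInt l i) hrhs pt
      _ = Real.exp (l ^ 2 * c1 ^ 2 / 2) *
          (1/2 + 1/2 * (∫ ω, Real.exp ((Y i ω) ^ 2 / c1 ^ 2) ∂μ)) := by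
        rw [integral_const_mul, integral_add (integrable_const _) hgc, integral_const_mul]
        simp
    have hIb : 1/2 + 1/2 * (∫ ω, Real.exp ((Y i ω) ^ 2 / c1 ^ 2) ∂μ) ≤
        Real.exp (c2 ^ 2 / (2 * c1 ^ 2)) := by
      have hI : (∫ ω, Real.exp ((Y i ω) ^ 2 / c1 ^ 2) ∂μ) - 1 ≤ c2 ^ 2 / c1 ^ 2 := by
        rw [le_div_iff₀ hc1sq]; nlinarith [hsub i]
      have h2 : 1 + c2 ^ 2 / (2 * c1 ^ 2) ≤ Real.exp (c2 ^ 2 / (2 * c1 ^ 2)) := by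
        linarith [Real.add_one_le_exp (c2 ^ 2 / (2 * c1 ^ 2))]
      have h3 : c2 ^ 2 / c1 ^ 2 = 2 * (c2 ^ 2 / (2 * c1 ^ 2)) := by field_simp
      linarith
    calc mgf (Y i) μ l ≤ Real.exp (l ^ 2 * c1 ^ 2 / 2) *
        (1/2 + 1/2 * (∫ ω, Real.exp ((Y i ω) ^ 2 / c1 ^ 2) ∂μ)) := hstep
    _ ≤ Real.exp (l ^ 2 * c1 ^ 2 / 2) * Real.exp (c2 ^ 2 / (2 * c1 ^ 2)) :=
        mul_le_mul_of_nonneg_left hIb (Real.exp_pos _).le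
    _ = Real.exp (l ^ 2 * c1 ^ 2 / 2 + c2 ^ 2 / (2 * c1 ^ 2)) := (Real.exp_add _ _).symm
  -- generic tail bound
  have main : ∀ (l a : ℝ), 0 ≤ l → (∀ i, mgf (Y i) μ l ≤ Real.exp a) →
      (∀ i, mgf (Y i) μ (-l) ≤ Real.exp a) →
      (μ {ω | t < |(n : ℝ)⁻¹ * ∑ i, Y i ω|}).toReal ≤
        2 * Real.exp (-(l * ((n:ℝ) * t)) + (n:ℝ) * a) := by
    intro l a hl hb1 hb2
    set S : Ω → ℝ := ∑ i, Y i with hS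
    have hSapp : ∀ ω, S ω = ∑ i, Y i ω := fun ω => by simp [hS]
    have hsub1 : {ω | t < |(n : ℝ)⁻¹ * ∑ i, Y i ω|} ⊆
        {ω | (n:ℝ) * t ≤ S ω} ∪ {ω | S ω ≤ -((n:ℝ) * t)} := by
      intro ω hω
      simp only [Set.mem_setOf_eq, Set.mem_union] at *
      rw [abs_mul, abs_inv, abs_of_pos hnR] at hω
      have h1 : (n:ℝ) * t < |∑ i, Y i ω| := (lt_inv_mul_iff₀ hnR).1 hω
      rw [← hSapp ω] at h1
      rcases (lt_abs.1 h1) with h | h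
      · exact Or.inl h.le
      · exact Or.inr (by linarith)
    have hmgfS : ∀ l' : ℝ, (∀ i, mgf (Y i) μ l' ≤ Real.exp a) →
        mgf S μ l' ≤ Real.exp ((n:ℝ) * a) := by
      intro l' hb
      rw [hS, hindep.mgf_sum hmeas Finset.univ]
      calc (∏ i, mgf (Y i) μ l') ≤ ∏ _i : Fin n, Real.exp a :=
        Finset.prod_le_prod (fun i _ => mgf_nonneg) (fun i _ => hb i)
      _ = Real.exp ((n:ℝ) * a) := by
          rw [Finset.prod_const, Finset.card_univ, Fintype.card_fin, ← Real.exp_nat_mul]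
    have hup := measure_ge_le_exp_mul_mgf (X := S) (μ := μ) ((n:ℝ) * t) hl
      (hindep.integrable_exp_mul_sum hmeas (fun i _ => hInt l i))
    have hlo := measure_le_le_exp_mul_mgf (X := S) (μ := μ) (-((n:ℝ) * t))
      (neg_nonpos.2 hl) (hindep.integrable_exp_mul_sum hmeas (fun i _ => hInt (-l) i))
    rw [neg_mul] at hup
    rw [neg_neg, mul_neg] at hlo
    have hup' : (μ {ω | (n:ℝ) * t ≤ S ω}).toReal ≤
        Real.exp (-(l * ((n:ℝ)*t)) + (n:ℝ) * a) := by
      refine hup.trans ?_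
      rw [Real.exp_add]
      exact mul_le_mul_of_nonneg_left (hmgfS l hb1) (Real.exp_pos _).le
    have hlo' : (μ {ω | S ω ≤ -((n:ℝ) * t)}).toReal ≤
        Real.exp (-(l * ((n:ℝ)*t)) + (n:ℝ) * a) := by
      refine hlo.trans ?_
      rw [Real.exp_add]
      exact mul_le_mul_of_nonneg_left (hmgfS (-l) hb2) (Real.exp_pos _).le
    have hmeasle : μ {ω | t < |(n : ℝ)⁻¹ * ∑ i, Y i ω|} ≤
        μ {ω | (n:ℝ) * t ≤ S ω} + μ {ω | S ω ≤ -((n:ℝ) * t)} :=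
      (measure_mono hsub1).trans (measure_union_le _ _)
    have hfin1 : μ {ω | (n:ℝ) * t ≤ S ω} ≠ ⊤ := measure_ne_top _ _
    have hfin2 : μ {ω | S ω ≤ -((n:ℝ) * t)} ≠ ⊤ := measure_ne_top _ _
    have htr : (μ {ω | t < |(n : ℝ)⁻¹ * ∑ i, Y i ω|}).toReal ≤
        (μ {ω | (n:ℝ) * t ≤ S ω}).toReal + (μ {ω | S ω ≤ -((n:ℝ) * t)}).toReal := by
      rw [← ENNReal.toReal_add hfin1 hfin2]
      exact ENNReal.toReal_mono (ENNReal.add_ne_top.2 ⟨hfin1, hfin2⟩) hmeasle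
    linarith
  -- choose l per case and conclude
  have hfinal : (μ {ω | t < |(n : ℝ)⁻¹ * ∑ i, Y i ω|}).toReal ≤
      2 * Real.exp (-((n:ℝ) * t ^ 2) / (8 * K)) := by
    rcases le_or_gt (t * c1) (2 * K) with hcase | hcase
    · -- small t: l = t/(2K)
      have hl0 : (0:ℝ) ≤ t / (2 * K) := by positivity
      have hlc : (t / (2 * K)) ^ 2 * c1 ^ 2 ≤ 1 := by
        rw [div_pow, div_mul_eq_mul_div, div_le_one (by positivity)]
        nlinarith [mul_pos ht hc1, hKpos]
      have h1 := main (t / (2 * K)) ((t / (2 * K)) ^ 2 * K) hl0 (hA _ hlc)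
        (fun i => by simpa [neg_sq] using hA (-(t / (2 * K))) (by rwa [neg_sq]) i)
      refine h1.trans ?_
      have hle : -(t / (2 * K) * ((n:ℝ) * t)) + (n:ℝ) * ((t / (2 * K)) ^ 2 * K) ≤
          -((n:ℝ) * t ^ 2) / (8 * K) := by
        have e1 : -(t / (2 * K) * ((n:ℝ) * t)) + (n:ℝ) * ((t / (2 * K)) ^ 2 * K) =
            -((n:ℝ) * t ^ 2) / (4 * K) := by
          field_simp
          ring
        rw [e1, neg_div, neg_div, neg_le_neg_iff]
        exact div_le_div_of_nonneg_left (by positivity) (by positivity) (by linarith)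
      linarith [Real.exp_le_exp.2 hle]
    · -- large t: l = t/c1^2
      have hl0 : (0:ℝ) ≤ t / c1 ^ 2 := by positivity
      have h1 := main (t / c1 ^ 2)
        ((t / c1 ^ 2) ^ 2 * c1 ^ 2 / 2 + c2 ^ 2 / (2 * c1 ^ 2)) hl0 (fun i => hB _ i)
        (fun i => by simpa [neg_sq] using hB (-(t / c1 ^ 2)) i)
      refine h1.trans ?_
      have h4 : 4 * c2 < t := by nlinarith [sq_nonneg (c1 - c2), mul_pos ht hc1]
      have h5 : 16 * c2 ^ 2 < t ^ 2 := by nlinarith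
      have hbr : 0 ≤ 8 * (c1 ^ 2 + c2 ^ 2) * (t ^ 2 - c2 ^ 2) - 2 * t ^ 2 * c1 ^ 2 := by
        nlinarith [mul_le_mul_of_nonneg_left h5.le hc1sq.le,
          mul_le_mul_of_nonneg_left h5.le (sq_nonneg c2)]
      have hle : -(t / c1 ^ 2 * ((n:ℝ) * t)) +
          (n:ℝ) * ((t / c1 ^ 2) ^ 2 * c1 ^ 2 / 2 + c2 ^ 2 / (2 * c1 ^ 2)) ≤
          -((n:ℝ) * t ^ 2) / (8 * K) := by
        have e2 : -(t / c1 ^ 2 * ((n:ℝ) * t)) +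
            (n:ℝ) * ((t / c1 ^ 2) ^ 2 * c1 ^ 2 / 2 + c2 ^ 2 / (2 * c1 ^ 2)) =
            (n:ℝ) * (c2 ^ 2 - t ^ 2) / (2 * c1 ^ 2) := by
          field_simp
          ring
        rw [e2, hK, div_le_div_iff₀ (by positivity) (by positivity)]
        nlinarith [mul_nonneg hnR.le hbr]
      linarith [Real.exp_le_exp.2 hle]
  have hfin : μ {ω | t < |(n : ℝ)⁻¹ * ∑ i, Y i ω|} ≠ ⊤ := measure_ne_top _ _
  calc μ {ω | t < |(n : ℝ)⁻¹ * ∑ i, Y i ω|}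
      = ENNReal.ofReal ((μ {ω | t < |(n : ℝ)⁻¹ * ∑ i, Y i ω|}).toReal) :=
        (ENNReal.ofReal_toReal hfin).symm
  _ ≤ ENNReal.ofReal (2 * Real.exp (-(n * t ^ 2) / (8 * (c1 ^ 2 + c2 ^ 2)))) := by
      apply ENNReal.ofReal_le_ofReal
      rw [hK] at hfinal
      exact hfinal
end

section
/- Suppose X is a bounded random variable with |X| ≤ c0 a.s., and Y is sub-Gaussian: c1^2 E[exp(Y^2/c1^2) - 1] ≤ c2^2. Then Z = X Y^2 satisfies E[|Z - E[Z]|^k] ≤ (k!/2) c3^{k-2} c4^2 for all integers k ≥ 2, with c3 = 2 c0 c1^2 and c4 = 2 c0 c1 c2. -/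
open MeasureTheory

/-- For `x ≥ 0`, `2 x^(j+2) ≤ (j+2)! (e^x - 1)`. -/
lemma aux_two_pow_le_factorial_mul_exp_sub_one (j : ℕ) {x : ℝ} (hx : 0 ≤ x) :
    2 * x ^ (j + 2) ≤ ((j + 2).factorial : ℝ) * (Real.exp x - 1) := by
  have hs := Real.sum_le_exp_of_nonneg hx (j + 4)
  have hsub : ({0, j + 1, j + 2, j + 3} : Finset ℕ) ⊆ Finset.range (j + 4) := by
    intro i hi
    simp only [Finset.mem_insert, Finset.mem_singleton] at hi
    simp only [Finset.mem_range]
    omega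
  have hmono := Finset.sum_le_sum_of_subset_of_nonneg hsub
    (fun i _ _ => by positivity : ∀ i ∈ Finset.range (j + 4),
      i ∉ ({0, j + 1, j + 2, j + 3} : Finset ℕ) → 0 ≤ x ^ i / (i.factorial : ℝ))
  rw [Finset.sum_insert (by simp only [Finset.mem_insert, Finset.mem_singleton]; omega),
    Finset.sum_insert (by simp only [Finset.mem_insert, Finset.mem_singleton]; omega),
    Finset.sum_insert (by simp only [Finset.mem_singleton]; omega),
    Finset.sum_singleton] at hmono
  have hexp := hmono.trans hs
  simp only [pow_zero, Nat.factorial_zero, Nat.cast_one, div_one] at hexp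
  have hF : (0 : ℝ) < ((j + 1).factorial : ℝ) := by positivity
  have e1 : ((j + 2).factorial : ℝ) = ((j : ℝ) + 2) * ((j + 1).factorial : ℝ) := by
    rw [show j + 2 = (j + 1) + 1 from rfl, Nat.factorial_succ]
    push_cast; ring
  have e2 : ((j + 3).factorial : ℝ) = ((j : ℝ) + 3) * (((j : ℝ) + 2) * ((j + 1).factorial : ℝ)) := by
    rw [show j + 3 = (j + 2) + 1 from rfl, Nat.factorial_succ]
    push_cast
    rw [e1]
    ring
  rw [e1, e2] at hexp
  set F := ((j + 1).factorial : ℝ) with hFdef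
  set u := x ^ (j + 1) with hu
  have hu0 : 0 ≤ u := by positivity
  have p1 : x ^ (j + 2) = x * u := by rw [hu]; ring
  have p2 : x ^ (j + 3) = x ^ 2 * u := by rw [hu]; ring
  rw [p1] at hexp ⊢
  rw [p2] at hexp
  -- key quadratic inequality
  have key : x * u - ((j : ℝ) + 2) * u ≤ x ^ 2 * u / ((j : ℝ) + 3) := by
    rw [le_div_iff₀ (by positivity : (0 : ℝ) < (j : ℝ) + 3)]
    nlinarith [mul_nonneg hu0 (sq_nonneg (2 * x - ((j : ℝ) + 3))),
      mul_nonneg hu0 (by positivity : (0 : ℝ) ≤ ((j : ℝ) + 3) * (3 * (j : ℝ) + 5))]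
  -- expand the sum times ((j+2) * F)
  have hexpand :
      ((j : ℝ) + 2) * F * (u / F + (x * u / (((j : ℝ) + 2) * F)
          + x ^ 2 * u / (((j : ℝ) + 3) * (((j : ℝ) + 2) * F))))
        = ((j : ℝ) + 2) * u + x * u + x ^ 2 * u / ((j : ℝ) + 3) := by
    field_simp
    ring
  have hS : u / F + (x * u / (((j : ℝ) + 2) * F)
      + x ^ 2 * u / (((j : ℝ) + 3) * (((j : ℝ) + 2) * F))) ≤ Real.exp x - 1 := by
    linarith
  calc 2 * (x * u)
      ≤ ((j : ℝ) + 2) * u + x * u + x ^ 2 * u / ((j : ℝ) + 3) := by linarith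
    _ = ((j : ℝ) + 2) * F * (u / F + (x * u / (((j : ℝ) + 2) * F)
          + x ^ 2 * u / (((j : ℝ) + 3) * (((j : ℝ) + 2) * F)))) := hexpand.symm
    _ ≤ ((j : ℝ) + 2) * F * (Real.exp x - 1) :=
        mul_le_mul_of_nonneg_left hS (by positivity)
    _ = ((j + 2).factorial : ℝ) * (Real.exp x - 1) := by rw [e1]

/-- If `|X| ≤ c0` a.s. and `Y` is sub-Gaussian, then `Z = X Y²` satisfies the Bernstein
moment condition with `c3 = 2 c0 c1²` and `c4 = 2 c0 c1 c2`. -/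
theorem stmt9 {Ω : Type*} [MeasurableSpace Ω] (μ : Measure Ω) [IsProbabilityMeasure μ]
    (X Y : Ω → ℝ) (c0 c1 c2 : ℝ) (hc0 : 0 < c0) (hc1 : 0 < c1) (hc2 : 0 < c2)
    (hX : ∀ᵐ ω ∂μ, |X ω| ≤ c0)
    (hintexp : Integrable (fun ω => Real.exp ((Y ω) ^ 2 / c1 ^ 2)) μ)
    (hsub : c1 ^ 2 * ((∫ ω, Real.exp ((Y ω) ^ 2 / c1 ^ 2) ∂μ) - 1) ≤ c2 ^ 2)
    (hintZ : Integrable (fun ω => X ω * (Y ω) ^ 2) μ)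
    (hintZk : ∀ k : ℕ,
      Integrable (fun ω => |X ω * (Y ω) ^ 2 - ∫ ω', X ω' * (Y ω') ^ 2 ∂μ| ^ k) μ) :
    ∀ k : ℕ, 2 ≤ k →
      ∫ ω, |X ω * (Y ω) ^ 2 - ∫ ω', X ω' * (Y ω') ^ 2 ∂μ| ^ k ∂μ ≤
        (k.factorial : ℝ) / 2 * (2 * c0 * c1 ^ 2) ^ (k - 2) * (2 * c0 * c1 * c2) ^ 2 := by
  intro k hk
  obtain ⟨j, rfl⟩ : ∃ j, k = j + 2 := ⟨k - 2, by omega⟩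
  simp only [Nat.add_sub_cancel]
  set m := ∫ ω', X ω' * (Y ω') ^ 2 ∂μ with hm
  set t := (∫ ω, Real.exp ((Y ω) ^ 2 / c1 ^ 2) ∂μ) - 1 with ht
  set C := c0 ^ (j + 2) * c1 ^ (2 * (j + 2)) * (((j + 2).factorial : ℝ) / 2) with hC
  have hC0 : 0 ≤ C := by positivity
  set B := fun ω => C * (Real.exp ((Y ω) ^ 2 / c1 ^ 2) - 1) with hB
  have hBint : Integrable B μ := (hintexp.sub (integrable_const 1)).const_mul C
  -- t ≥ 0
  have ht0 : 0 ≤ t := by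
    have h1 : (1 : ℝ) ≤ ∫ ω, Real.exp ((Y ω) ^ 2 / c1 ^ 2) ∂μ := by
      have := integral_mono (integrable_const (1 : ℝ)) hintexp
        (fun ω => Real.one_le_exp (by positivity))
      simpa using this
    rw [ht]
    linarith
  -- pointwise a.e. : |Z|^k ≤ B
  have hZB : ∀ᵐ ω ∂μ, |X ω * (Y ω) ^ 2| ^ (j + 2) ≤ B ω := by
    filter_upwards [hX] with ω hω
    have hg0 : (0 : ℝ) ≤ (Y ω) ^ 2 / c1 ^ 2 := by positivity
    have haux := aux_two_pow_le_factorial_mul_exp_sub_one j hg0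
    have h1 : |X ω * (Y ω) ^ 2| ^ (j + 2) ≤ c0 ^ (j + 2) * ((Y ω) ^ 2) ^ (j + 2) := by
      rw [abs_mul, abs_of_nonneg (sq_nonneg (Y ω)), ← mul_pow] at *
      exact pow_le_pow_left₀ (by positivity)
        (mul_le_mul_of_nonneg_right hω (sq_nonneg _)) _
    have h2 : ((Y ω) ^ 2) ^ (j + 2) = c1 ^ (2 * (j + 2)) * ((Y ω) ^ 2 / c1 ^ 2) ^ (j + 2) := by
      rw [div_pow, pow_mul]
      field_simp
    have h3 : ((Y ω) ^ 2 / c1 ^ 2) ^ (j + 2) ≤ (((j + 2).factorial : ℝ) / 2)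
        * (Real.exp ((Y ω) ^ 2 / c1 ^ 2) - 1) := by linarith
    calc |X ω * (Y ω) ^ 2| ^ (j + 2)
        ≤ c0 ^ (j + 2) * ((Y ω) ^ 2) ^ (j + 2) := h1
      _ = c0 ^ (j + 2) * c1 ^ (2 * (j + 2)) * ((Y ω) ^ 2 / c1 ^ 2) ^ (j + 2) := by
          rw [h2]; ring
      _ ≤ c0 ^ (j + 2) * c1 ^ (2 * (j + 2)) * ((((j + 2).factorial : ℝ) / 2)
          * (Real.exp ((Y ω) ^ 2 / c1 ^ 2) - 1)) :=
          mul_le_mul_of_nonneg_left h3 (by positivity)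
      _ = B ω := by rw [hB, hC]; ring
  -- integrability of |Z|^k
  have hAbsZkInt : Integrable (fun ω => |X ω * (Y ω) ^ 2| ^ (j + 2)) μ := by
    refine hBint.mono ?_ ?_
    · exact ((continuous_abs.pow (j + 2)).comp_aestronglyMeasurable hintZ.aestronglyMeasurable)
    · filter_upwards [hZB] with ω hω
      rw [Real.norm_eq_abs, Real.norm_eq_abs, abs_of_nonneg (by positivity)]
      exact hω.trans (le_abs_self _)
  -- ∫ |Z|^k ≤ ∫ B = C * t
  have hIB : ∫ ω, B ω ∂μ = C * t := by
    rw [hB, integral_const_mul, integral_sub hintexp (integrable_const 1), integral_const]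
    simp [ht]
  have hintL : ∫ ω, |X ω * (Y ω) ^ 2| ^ (j + 2) ∂μ ≤ C * t := by
    rw [← hIB]; exact integral_mono_ae hAbsZkInt hBint hZB
  -- Jensen: |m|^k ≤ ∫ |Z|^k
  have hJ : (∫ ω, |X ω * (Y ω) ^ 2| ∂μ) ^ (j + 2) ≤ ∫ ω, |X ω * (Y ω) ^ 2| ^ (j + 2) ∂μ := by
    have := (convexOn_pow (j + 2)).map_integral_le (μ := μ)
      (f := fun ω => |X ω * (Y ω) ^ 2|)
      ((continuous_pow (j + 2)).continuousOn) isClosed_Ici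
      (Filter.Eventually.of_forall fun ω => Set.mem_Ici.mpr (abs_nonneg _))
      hintZ.abs (by exact hAbsZkInt)
    exact this
  have hmabs : |m| ≤ ∫ ω, |X ω * (Y ω) ^ 2| ∂μ := by
    rw [hm]
    simpa only [Real.norm_eq_abs] using
      norm_integral_le_integral_norm (μ := μ) (f := fun ω' => X ω' * (Y ω') ^ 2)
  have hmk : |m| ^ (j + 2) ≤ C * t :=
    le_trans (le_trans (pow_le_pow_left₀ (abs_nonneg _) hmabs _) hJ) hintL
  -- main centering step
  have hpt : ∀ ω, |X ω * (Y ω) ^ 2 - m| ^ (j + 2)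
      ≤ 2 ^ (j + 1) * (|X ω * (Y ω) ^ 2| ^ (j + 2) + |m| ^ (j + 2)) := by
    intro ω
    calc |X ω * (Y ω) ^ 2 - m| ^ (j + 2)
        ≤ (|X ω * (Y ω) ^ 2| + |m|) ^ (j + 2) :=
          pow_le_pow_left₀ (abs_nonneg _) (abs_sub _ _) _
      _ ≤ 2 ^ (j + 2 - 1) * (|X ω * (Y ω) ^ 2| ^ (j + 2) + |m| ^ (j + 2)) :=
          add_pow_le (abs_nonneg _) (abs_nonneg _) _
      _ = 2 ^ (j + 1) * (|X ω * (Y ω) ^ 2| ^ (j + 2) + |m| ^ (j + 2)) := by norm_num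
  have hRint : Integrable
      (fun ω => 2 ^ (j + 1) * (|X ω * (Y ω) ^ 2| ^ (j + 2) + |m| ^ (j + 2))) μ :=
    (hAbsZkInt.add (integrable_const _)).const_mul _
  have step1 : ∫ ω, |X ω * (Y ω) ^ 2 - m| ^ (j + 2) ∂μ
      ≤ 2 ^ (j + 1) * ((∫ ω, |X ω * (Y ω) ^ 2| ^ (j + 2) ∂μ) + |m| ^ (j + 2)) := by
    have := integral_mono (hintZk (j + 2)) hRint hpt
    rwa [integral_const_mul, integral_add hAbsZkInt (integrable_const _), integral_const,
      probReal_univ, one_smul] at this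
  -- conclude
  have hfinal : ∫ ω, |X ω * (Y ω) ^ 2 - m| ^ (j + 2) ∂μ ≤ 2 ^ (j + 2) * (C * t) := by
    calc ∫ ω, |X ω * (Y ω) ^ 2 - m| ^ (j + 2) ∂μ
        ≤ 2 ^ (j + 1) * ((∫ ω, |X ω * (Y ω) ^ 2| ^ (j + 2) ∂μ) + |m| ^ (j + 2)) := step1
      _ ≤ 2 ^ (j + 1) * (C * t + C * t) := by
          have h2 : (0:ℝ) ≤ 2 ^ (j + 1) := by positivity
          exact mul_le_mul_of_nonneg_left (add_le_add hintL hmk) h2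
      _ = 2 ^ (j + 2) * (C * t) := by ring
  refine hfinal.trans ?_
  -- algebra: 2^(j+2) * C * t ≤ (k!/2) (2c0c1²)^j (2c0c1c2)²
  have hct : c1 ^ 2 * t ≤ c2 ^ 2 := hsub
  calc 2 ^ (j + 2) * (C * t)
      = (((j + 2).factorial : ℝ) / 2) * (2 ^ (j + 2) * c0 ^ (j + 2) * c1 ^ (2 * j + 2))
        * (c1 ^ 2 * t) := by rw [hC]; ring
    _ ≤ (((j + 2).factorial : ℝ) / 2) * (2 ^ (j + 2) * c0 ^ (j + 2) * c1 ^ (2 * j + 2))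
        * c2 ^ 2 := mul_le_mul_of_nonneg_left hct (by positivity)
    _ = ((j + 2).factorial : ℝ) / 2 * (2 * c0 * c1 ^ 2) ^ j * (2 * c0 * c1 * c2) ^ 2 := by
        ring
end

section
/- Let Y, D, Z be random variables/vectors with D ∈ {0,1}, and suppose Assumption (unconfoundedness): (Y_1, Y_0) ⫫ D | Z, Y = D Y_1 + (1-D) Y_0, and η < E[D|Z] < 1 - η a.s. for some η ∈ (0,1). Let π*(Z) = E[D|Z] and m*(Z) = E[Y | D=1, Z]. Define the aIPW signal Y(π, m) = D Y / π(Z) - (D/π(Z) - 1) m(Z). Then for any measurable integrable π with η ≤ π(Z) ≤ 1-η and any integrable m, E[Y(π*, m) | X] = E[Y_1 | X] and E[Y(π, m*) | X] = E[Y_1 | X], where X is a measurable function of Z (double robustness of the aIPW signal). -/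
open MeasureTheory ProbabilityTheory
open scoped ENNReal NNReal

/-- Double robustness of the aIPW signal: under unconfoundedness `(Y₁,Y₀) ⫫ D | Z`, overlap,
`π*(Z) = E[D|Z]` and `m*(Z) = E[Y | D=1, Z]` (encoded as `π*(Z) m*(Z) = E[DY|Z]`), for any
bounded-away-from-0-and-1 propensity model `π` and any outcome model `m`, conditioning on
`X = f(Z)`: `E[Y(π*, m) | X] = E[Y₁ | X]` and `E[Y(π, m*) | X] = E[Y₁ | X]`. -/
theorem stmt18 {Ωs 𝒵 𝒳 : Type*} [MeasurableSpace Ωs] [StandardBorelSpace Ωs] [Nonempty Ωs]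
    [MeasurableSpace 𝒵] [MeasurableSpace 𝒳]
    (μ : Measure Ωs) [IsProbabilityMeasure μ]
    (Y1 Y0 D Yobs : Ωs → ℝ) (Z : Ωs → 𝒵) (f : 𝒵 → 𝒳)
    (hY1 : Measurable Y1) (hY0 : Measurable Y0) (hDmeas : Measurable D)
    (hZ : Measurable Z) (hf : Measurable f)
    (hY1int : Integrable Y1 μ) (hY0int : Integrable Y0 μ)
    (hbin : ∀ ω, D ω = 0 ∨ D ω = 1)
    (hYobs : ∀ ω, Yobs ω = D ω * Y1 ω + (1 - D ω) * Y0 ω)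
    (hZle : MeasurableSpace.comap Z inferInstance ≤ (inferInstance : MeasurableSpace Ωs))
    -- unconfoundedness: (Y₁, Y₀) ⫫ D | Z
    (hindep : CondIndepFun (MeasurableSpace.comap Z inferInstance) hZle
      (fun ω => (Y1 ω, Y0 ω)) D μ)
    (η : ℝ) (hη : η ∈ Set.Ioo (0 : ℝ) 1)
    (πstar mstar : 𝒵 → ℝ) (hπstarmeas : Measurable πstar) (hmstarmeas : Measurable mstar)
    -- π*(Z) = E[D | Z]
    (hπstar : (fun ω => πstar (Z ω)) =ᵐ[μ] μ[D | MeasurableSpace.comap Z inferInstance])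
    -- overlap: η < E[D|Z] < 1 - η a.s.
    (hoverlap : ∀ᵐ ω ∂μ, η < πstar (Z ω) ∧ πstar (Z ω) < 1 - η)
    -- m*(Z) = E[Y | D = 1, Z], i.e. π*(Z) m*(Z) = E[D Y | Z]
    (hmstar : (fun ω => πstar (Z ω) * mstar (Z ω)) =ᵐ[μ]
      μ[fun ω => D ω * Yobs ω | MeasurableSpace.comap Z inferInstance])
    (π m : 𝒵 → ℝ) (hπmeas : Measurable π) (hmmeas : Measurable m)
    (hπbound : ∀ z, η ≤ π z ∧ π z ≤ 1 - η)
    (hmint : Integrable (fun ω => m (Z ω)) μ)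
    (hmstarint : Integrable (fun ω => mstar (Z ω)) μ)
    (hsig1int : Integrable
      (fun ω => D ω * Yobs ω / πstar (Z ω) - (D ω / πstar (Z ω) - 1) * m (Z ω)) μ)
    (hsig2int : Integrable
      (fun ω => D ω * Yobs ω / π (Z ω) - (D ω / π (Z ω) - 1) * mstar (Z ω)) μ) :
    (μ[fun ω => D ω * Yobs ω / πstar (Z ω) - (D ω / πstar (Z ω) - 1) * m (Z ω) |
        MeasurableSpace.comap (fun ω => f (Z ω)) inferInstance] =ᵐ[μ]
      μ[Y1 | MeasurableSpace.comap (fun ω => f (Z ω)) inferInstance]) ∧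
    (μ[fun ω => D ω * Yobs ω / π (Z ω) - (D ω / π (Z ω) - 1) * mstar (Z ω) |
        MeasurableSpace.comap (fun ω => f (Z ω)) inferInstance] =ᵐ[μ]
      μ[Y1 | MeasurableSpace.comap (fun ω => f (Z ω)) inferInstance]) := by
  obtain ⟨hη0, hη1⟩ := hη
  have hXZ : MeasurableSpace.comap (fun ω => f (Z ω)) inferInstance
      ≤ MeasurableSpace.comap Z inferInstance := by
    have h1 : (fun ω => f (Z ω)) = f ∘ Z := rfl
    rw [h1, ← MeasurableSpace.comap_comp]
    exact MeasurableSpace.comap_mono (measurable_iff_comap_le.mp hf)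
  -- basic facts about D
  have hD01 : ∀ ω, 0 ≤ D ω ∧ D ω ≤ 1 := by
    intro ω; rcases hbin ω with h | h <;> rw [h] <;> norm_num
  have hDY : ∀ ω, D ω * Yobs ω = D ω * Y1 ω := by
    intro ω; rw [hYobs ω]; rcases hbin ω with h | h <;> rw [h] <;> ring
  have hDint : Integrable D μ := by
    refine (integrable_const (1 : ℝ)).mono' hDmeas.aestronglyMeasurable ?_
    exact Filter.Eventually.of_forall fun ω => by
      rw [Real.norm_eq_abs, abs_of_nonneg (hD01 ω).1]; exact (hD01 ω).2
  -- a.e.-bounded multiplier integrability helper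
  have hbd_int : ∀ (g h : Ωs → ℝ) (c : ℝ), AEStronglyMeasurable (fun ω => g ω * h ω) μ →
      Integrable h μ → (∀ᵐ ω ∂μ, |g ω| ≤ c) → Integrable (fun ω => g ω * h ω) μ := by
    intro g h c hgh hh hb
    refine (hh.abs.const_mul c).mono' hgh ?_
    filter_upwards [hb] with ω hω
    rw [Real.norm_eq_abs, abs_mul]
    exact mul_le_mul_of_nonneg_right hω (abs_nonneg _)
  have hDYobsint : Integrable (fun ω => D ω * Yobs ω) μ := by
    have h1 : (fun ω => D ω * Yobs ω) = fun ω => D ω * Y1 ω := funext hDY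
    rw [h1]
    refine hbd_int D Y1 1 (hDmeas.mul hY1).aestronglyMeasurable hY1int ?_
    exact Filter.Eventually.of_forall fun ω => by
      rw [abs_of_nonneg (hD01 ω).1]; exact (hD01 ω).2
  -- strongly (MeasurableSpace.comap Z inferInstance)-measurable compositions
  have hZsm : ∀ {g : 𝒵 → ℝ}, Measurable g → StronglyMeasurable[(MeasurableSpace.comap Z inferInstance)] (fun ω => g (Z ω)) :=
    fun {g} hg => (hg.comp (comap_measurable Z)).stronglyMeasurable
  set q : Ωs → ℝ := μ[Y1 | (MeasurableSpace.comap Z inferInstance)] with hqdef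
  have hπZmeas : Measurable fun ω => πstar (Z ω) := hπstarmeas.comp hZ
  have hπZnonneg : ∀ᵐ ω ∂μ, 0 ≤ πstar (Z ω) :=
    hoverlap.mono fun ω hω => le_of_lt (lt_trans hη0 hω.1)
  have hπZbd : ∀ᵐ ω ∂μ, |πstar (Z ω)| ≤ 1 := by
    filter_upwards [hoverlap] with ω hω
    rw [abs_of_nonneg (le_of_lt (lt_trans hη0 hω.1))]
    linarith [hω.2]
  -- pull-out property helper
  have hpull : ∀ (g h : Ωs → ℝ), StronglyMeasurable[(MeasurableSpace.comap Z inferInstance)] g →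
      Integrable (fun ω => g ω * h ω) μ → Integrable h μ →
      μ[fun ω => g ω * h ω | (MeasurableSpace.comap Z inferInstance)] =ᵐ[μ] fun ω => g ω * (μ[h | (MeasurableSpace.comap Z inferInstance)]) ω := by
    intro g h hgsm hgh hh
    exact condExp_mul_of_stronglyMeasurable_left hgsm hgh hh
  -- D as an indicator
  have hDind : D = (D ⁻¹' {1}).indicator (fun _ => (1 : ℝ)) := by
    funext ω
    rcases hbin ω with h | h
    · have hωA : ω ∉ D ⁻¹' {1} := by simp [Set.mem_preimage, h]
      simp [Set.indicator_of_notMem hωA, h]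
    · have hωA : ω ∈ D ⁻¹' {1} := by simp [Set.mem_preimage, h]
      simp [Set.indicator_of_mem hωA, h]
  have hAm : MeasurableSet (D ⁻¹' {1}) := hDmeas (measurableSet_singleton 1)
  have hindep1 : CondIndepFun (MeasurableSpace.comap Z inferInstance) hZle Y1 D μ :=
    hindep.comp (measurable_fst : Measurable (Prod.fst : ℝ × ℝ → ℝ)) measurable_id
  have hci := (condIndepFun_iff_condExp_inter_preimage_eq_mul (hm' := hZle) hY1 hDmeas).mp hindep1
  -- conditional expectation of D⁻¹{1} equals π*(Z) a.e.
  have hpA : (μ⟦D ⁻¹' {1} | (MeasurableSpace.comap Z inferInstance)⟧) =ᵐ[μ] fun ω => πstar (Z ω) := by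
    have h1 : (D ⁻¹' {1}).indicator (fun _ => (1 : ℝ)) = D := hDind.symm
    calc (μ⟦D ⁻¹' {1} | (MeasurableSpace.comap Z inferInstance)⟧) = μ[D | (MeasurableSpace.comap Z inferInstance)] := by rw [h1]
      _ =ᵐ[μ] fun ω => πstar (Z ω) := hπstar.symm
  -- KEY: E[D Y1 | Z] = π*(Z) E[Y1 | Z]
  have hDY1int : Integrable (fun ω => D ω * Y1 ω) μ := by
    have h1 : (fun ω => D ω * Y1 ω) = fun ω => D ω * Yobs ω := funext fun ω => (hDY ω).symm
    rw [h1]; exact hDYobsint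
  have hkey : (fun ω => πstar (Z ω) * q ω) =ᵐ[μ] μ[fun ω => D ω * Y1 ω | (MeasurableSpace.comap Z inferInstance)] := by
    have hPq_int : Integrable (fun ω => πstar (Z ω) * q ω) μ :=
      hbd_int _ q 1 (hπZmeas.aestronglyMeasurable.mul
        (stronglyMeasurable_condExp.mono hZle).aestronglyMeasurable) integrable_condExp hπZbd
    refine ae_eq_condExp_of_forall_setIntegral_eq hZle hDY1int
      (fun s _ _ => hPq_int.integrableOn) (fun s hs _ => ?_)
      (((hZsm hπstarmeas).mul stronglyMeasurable_condExp).aestronglyMeasurable)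
    have hs0 : MeasurableSet s := hZle _ hs
    -- Step 1: ∫_s π*(Z) q = ∫_s π*(Z) Y1
    have hPY1int : Integrable (fun ω => πstar (Z ω) * Y1 ω) μ :=
      hbd_int _ Y1 1 (hπZmeas.aestronglyMeasurable.mul hY1int.aestronglyMeasurable)
        hY1int hπZbd
    have hL : ∫ ω in s, πstar (Z ω) * q ω ∂μ = ∫ ω in s, πstar (Z ω) * Y1 ω ∂μ := by
      have h1 := hpull _ Y1 (hZsm hπstarmeas) hPY1int hY1int
      calc ∫ ω in s, πstar (Z ω) * q ω ∂μ
          = ∫ ω in s, (μ[fun ω => πstar (Z ω) * Y1 ω | (MeasurableSpace.comap Z inferInstance)]) ω ∂μ :=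
            (setIntegral_congr_ae hs0 (h1.mono fun ω hω _ => hω)).symm
        _ = ∫ ω in s, πstar (Z ω) * Y1 ω ∂μ := setIntegral_condExp hZle hPY1int hs
    -- Step 2: the two image measures coincide
    have hmap : Measure.map Y1 (μ.restrict (s ∩ D ⁻¹' {1}))
        = Measure.map Y1 ((μ.restrict s).withDensity
            (fun ω => ENNReal.ofReal (πstar (Z ω)))) := by
      ext B hB
      rw [Measure.map_apply hY1 hB, Measure.map_apply hY1 hB,
        Measure.restrict_apply (hY1 hB), withDensity_apply _ (hY1 hB),
        Measure.restrict_restrict (hY1 hB)]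
      have hfin1 : μ (Y1 ⁻¹' B ∩ (s ∩ D ⁻¹' {1})) ≠ ⊤ := measure_ne_top μ _
      have hfin2 : ∫⁻ ω in Y1 ⁻¹' B ∩ s, ENNReal.ofReal (πstar (Z ω)) ∂μ ≠ ⊤ := by
        have hle : ∫⁻ ω in Y1 ⁻¹' B ∩ s, ENNReal.ofReal (πstar (Z ω)) ∂μ
            ≤ ∫⁻ _ω in Y1 ⁻¹' B ∩ s, 1 ∂μ := by
          refine lintegral_mono_ae (ae_restrict_of_ae (hoverlap.mono fun ω hω => ?_))
          exact ENNReal.ofReal_le_one.mpr (by linarith [hω.2])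
        rw [setLIntegral_one] at hle
        exact ne_top_of_le_ne_top (measure_ne_top μ _) hle
      refine (ENNReal.toReal_eq_toReal_iff' hfin1 hfin2).mp ?_
      have hgBint : Integrable ((Y1 ⁻¹' B).indicator (fun _ => (1 : ℝ))) μ :=
        (integrable_const (1 : ℝ)).indicator (hY1 hB)
      have hE : MeasurableSet (Y1 ⁻¹' B ∩ D ⁻¹' {1}) := (hY1 hB).inter hAm
      have hPgB_int : Integrable
          (fun ω => πstar (Z ω) * (Y1 ⁻¹' B).indicator (fun _ => (1 : ℝ)) ω) μ :=
        hbd_int _ _ 1 (hπZmeas.aestronglyMeasurable.mul hgBint.aestronglyMeasurable)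
          hgBint hπZbd
      calc (μ (Y1 ⁻¹' B ∩ (s ∩ D ⁻¹' {1}))).toReal
          = ∫ ω in s, (Y1 ⁻¹' B ∩ D ⁻¹' {1}).indicator (fun _ => (1 : ℝ)) ω ∂μ := by
            rw [setIntegral_indicator hE, setIntegral_const, smul_eq_mul, mul_one,
              Set.inter_left_comm, measureReal_def]
        _ = ∫ ω in s, (μ⟦Y1 ⁻¹' B ∩ D ⁻¹' {1} | (MeasurableSpace.comap Z inferInstance)⟧) ω ∂μ :=
            (setIntegral_condExp hZle ((integrable_const (1 : ℝ)).indicator hE) hs).symm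
        _ = ∫ ω in s, (μ⟦Y1 ⁻¹' B | (MeasurableSpace.comap Z inferInstance)⟧) ω * (μ⟦D ⁻¹' {1} | (MeasurableSpace.comap Z inferInstance)⟧) ω ∂μ :=
            setIntegral_congr_ae hs0
              ((hci B {1} hB (measurableSet_singleton 1)).mono fun ω hω _ => hω)
        _ = ∫ ω in s, πstar (Z ω) * (μ⟦Y1 ⁻¹' B | (MeasurableSpace.comap Z inferInstance)⟧) ω ∂μ :=
            setIntegral_congr_ae hs0 (hpA.mono fun ω hω _ => by rw [hω, mul_comm])
        _ = ∫ ω in s,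
              (μ[fun ω => πstar (Z ω) * (Y1 ⁻¹' B).indicator (fun _ => (1 : ℝ)) ω | (MeasurableSpace.comap Z inferInstance)]) ω ∂μ :=
            (setIntegral_congr_ae hs0
              ((hpull _ _ (hZsm hπstarmeas) hPgB_int hgBint).mono
                fun ω hω _ => hω)).symm
        _ = ∫ ω in s, πstar (Z ω) * (Y1 ⁻¹' B).indicator (fun _ => (1 : ℝ)) ω ∂μ :=
            setIntegral_condExp hZle hPgB_int hs
        _ = ∫ ω in s, (Y1 ⁻¹' B).indicator (fun ω => πstar (Z ω)) ω ∂μ := by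
            refine setIntegral_congr_ae hs0 (Filter.Eventually.of_forall fun ω _ => ?_)
            by_cases h : ω ∈ Y1 ⁻¹' B <;> simp [h]
        _ = ∫ ω in Y1 ⁻¹' B ∩ s, πstar (Z ω) ∂μ := by
            rw [setIntegral_indicator (hY1 hB), Set.inter_comm]
        _ = (∫⁻ ω in Y1 ⁻¹' B ∩ s, ENNReal.ofReal (πstar (Z ω)) ∂μ).toReal := by
            rw [integral_eq_lintegral_of_nonneg_ae (ae_restrict_of_ae hπZnonneg)
              hπZmeas.aestronglyMeasurable.restrict]
    -- Step 3: conclude the set-integral identity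
    have hRHS : ∫ ω in s, D ω * Y1 ω ∂μ = ∫ ω in s ∩ D ⁻¹' {1}, Y1 ω ∂μ := by
      have h1 : ∀ ω, D ω * Y1 ω = (D ⁻¹' {1}).indicator Y1 ω := by
        intro ω
        rcases hbin ω with h | h
        · have hωA : ω ∉ D ⁻¹' {1} := by simp [Set.mem_preimage, h]
          simp [Set.indicator_of_notMem hωA, h]
        · have hωA : ω ∈ D ⁻¹' {1} := by simp [Set.mem_preimage, h]
          simp [Set.indicator_of_mem hωA, h]
      calc ∫ ω in s, D ω * Y1 ω ∂μ
          = ∫ ω in s, (D ⁻¹' {1}).indicator Y1 ω ∂μ :=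
            setIntegral_congr_ae hs0 (Filter.Eventually.of_forall fun ω _ => h1 ω)
        _ = ∫ ω in s ∩ D ⁻¹' {1}, Y1 ω ∂μ := setIntegral_indicator hAm
    have hmid : ∫ ω in s ∩ D ⁻¹' {1}, Y1 ω ∂μ = ∫ ω in s, πstar (Z ω) * Y1 ω ∂μ := by
      have h₁ : ∫ ω in s ∩ D ⁻¹' {1}, Y1 ω ∂μ
          = ∫ x, x ∂(Measure.map Y1 (μ.restrict (s ∩ D ⁻¹' {1}))) :=
        (integral_map hY1.aemeasurable aestronglyMeasurable_id).symm
      have h₂ : ∫ x, x ∂(Measure.map Y1 ((μ.restrict s).withDensity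
            (fun ω => ENNReal.ofReal (πstar (Z ω)))))
          = ∫ ω, Y1 ω ∂((μ.restrict s).withDensity
              (fun ω => ENNReal.ofReal (πstar (Z ω)))) :=
        integral_map hY1.aemeasurable aestronglyMeasurable_id
      have h₃ : ∫ ω, Y1 ω ∂((μ.restrict s).withDensity
            (fun ω => ENNReal.ofReal (πstar (Z ω))))
          = ∫ ω in s, ((πstar (Z ω)).toNNReal : ℝ) • Y1 ω ∂μ := by
        have hde : (fun ω => ENNReal.ofReal (πstar (Z ω)))
            = fun ω => (((πstar (Z ω)).toNNReal : ℝ≥0) : ℝ≥0∞) := rfl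
        rw [hde]
        exact integral_withDensity_eq_integral_smul hπZmeas.real_toNNReal Y1
      have h₄ : ∫ ω in s, ((πstar (Z ω)).toNNReal : ℝ) • Y1 ω ∂μ
          = ∫ ω in s, πstar (Z ω) * Y1 ω ∂μ := by
        refine setIntegral_congr_ae hs0 ?_
        filter_upwards [hπZnonneg] with ω hω _
        rw [smul_eq_mul, Real.coe_toNNReal _ hω]
      rw [h₁, hmap, h₂, h₃, h₄]
    rw [hL, hRHS, hmid]
  -- identification: mstar(Z) = E[Y1 | Z] a.e.
  have hqm : (fun ω => mstar (Z ω)) =ᵐ[μ] q := by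
    have h1 : (fun ω => πstar (Z ω) * mstar (Z ω)) =ᵐ[μ] fun ω => πstar (Z ω) * q ω := by
      calc (fun ω => πstar (Z ω) * mstar (Z ω))
          =ᵐ[μ] μ[fun ω => D ω * Yobs ω | (MeasurableSpace.comap Z inferInstance)] := hmstar
        _ =ᵐ[μ] μ[fun ω => D ω * Y1 ω | (MeasurableSpace.comap Z inferInstance)] :=
            condExp_congr_ae (Filter.Eventually.of_forall hDY)
        _ =ᵐ[μ] fun ω => πstar (Z ω) * q ω := hkey.symm
    filter_upwards [h1, hoverlap] with ω hω hov
    have hne : πstar (Z ω) ≠ 0 := ne_of_gt (lt_trans hη0 hov.1)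
    exact mul_left_cancel₀ hne hω
  -- conditional expectation of the aIPW signal given Z, for a general model (ρ, h)
  have hcomp : ∀ (ρ h : 𝒵 → ℝ), Measurable ρ → Measurable h →
      (∀ᵐ ω ∂μ, η ≤ ρ (Z ω) ∧ ρ (Z ω) ≤ 1 - η) → Integrable (fun ω => h (Z ω)) μ →
      μ[fun ω => D ω * Yobs ω / ρ (Z ω) - (D ω / ρ (Z ω) - 1) * h (Z ω) | (MeasurableSpace.comap Z inferInstance)] =ᵐ[μ]
        fun ω => πstar (Z ω) * mstar (Z ω) / ρ (Z ω)
          - (πstar (Z ω) / ρ (Z ω) - 1) * h (Z ω) := by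
    intro ρ h hρm hhm hρbd hhint
    have haminv : Measurable fun ω => (ρ (Z ω))⁻¹ := (hρm.comp hZ).inv
    have habd : ∀ᵐ ω ∂μ, |(ρ (Z ω))⁻¹| ≤ η⁻¹ := by
      filter_upwards [hρbd] with ω hω
      have h0 : 0 < ρ (Z ω) := lt_of_lt_of_le hη0 hω.1
      rw [abs_of_nonneg (le_of_lt (inv_pos.mpr h0))]
      exact inv_anti₀ hη0 hω.1
    have hdecomp : (fun ω => D ω * Yobs ω / ρ (Z ω) - (D ω / ρ (Z ω) - 1) * h (Z ω))
        = fun ω => ((ρ (Z ω))⁻¹ * (D ω * Yobs ω)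
            - ((ρ (Z ω))⁻¹ * h (Z ω)) * D ω) + h (Z ω) := by
      funext ω; simp only [div_eq_mul_inv]; ring
    have hu_int : Integrable (fun ω => (ρ (Z ω))⁻¹ * (D ω * Yobs ω)) μ :=
      hbd_int _ _ η⁻¹ (haminv.aestronglyMeasurable.mul hDYobsint.aestronglyMeasurable)
        hDYobsint habd
    have hv_int : Integrable (fun ω => ((ρ (Z ω))⁻¹ * h (Z ω)) * D ω) μ := by
      have h2 : (fun ω => ((ρ (Z ω))⁻¹ * h (Z ω)) * D ω)
          = fun ω => ((ρ (Z ω))⁻¹ * D ω) * h (Z ω) := by funext ω; ring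
      rw [h2]
      refine hbd_int _ _ η⁻¹ (((haminv.mul hDmeas).mul (hhm.comp hZ)).aestronglyMeasurable)
        hhint ?_
      filter_upwards [habd] with ω hω
      rw [abs_mul]
      calc |(ρ (Z ω))⁻¹| * |D ω| ≤ η⁻¹ * 1 := by
            refine mul_le_mul hω ?_ (abs_nonneg _) (le_of_lt (inv_pos.mpr hη0))
            rw [abs_of_nonneg (hD01 ω).1]; exact (hD01 ω).2
        _ = η⁻¹ := mul_one _
    have hw_int : Integrable (fun ω => h (Z ω)) μ := hhint
    have hcd1 : μ[fun ω => (ρ (Z ω))⁻¹ * (D ω * Yobs ω) | (MeasurableSpace.comap Z inferInstance)] =ᵐ[μ]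
        fun ω => (ρ (Z ω))⁻¹ * (μ[fun ω => D ω * Yobs ω | (MeasurableSpace.comap Z inferInstance)]) ω :=
      hpull _ _ (hZsm hρm.inv) hu_int hDYobsint
    have hcd2 : μ[fun ω => ((ρ (Z ω))⁻¹ * h (Z ω)) * D ω | (MeasurableSpace.comap Z inferInstance)] =ᵐ[μ]
        fun ω => ((ρ (Z ω))⁻¹ * h (Z ω)) * (μ[D | (MeasurableSpace.comap Z inferInstance)]) ω :=
      hpull _ D (hZsm (hρm.inv.mul hhm)) hv_int hDint
    have hw : μ[fun ω => h (Z ω) | (MeasurableSpace.comap Z inferInstance)] = fun ω => h (Z ω) :=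
      condExp_of_stronglyMeasurable hZle (hZsm hhm) hhint
    have h5 : μ[fun ω => D ω * Yobs ω / ρ (Z ω) - (D ω / ρ (Z ω) - 1) * h (Z ω) | (MeasurableSpace.comap Z inferInstance)]
        =ᵐ[μ] fun ω => (ρ (Z ω))⁻¹ * (πstar (Z ω) * mstar (Z ω))
          - ((ρ (Z ω))⁻¹ * h (Z ω)) * πstar (Z ω) + h (Z ω) := by
      rw [hdecomp]
      calc μ[fun ω => ((ρ (Z ω))⁻¹ * (D ω * Yobs ω)
              - ((ρ (Z ω))⁻¹ * h (Z ω)) * D ω) + h (Z ω) | (MeasurableSpace.comap Z inferInstance)]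
          =ᵐ[μ] μ[fun ω => (ρ (Z ω))⁻¹ * (D ω * Yobs ω)
              - ((ρ (Z ω))⁻¹ * h (Z ω)) * D ω | (MeasurableSpace.comap Z inferInstance)] + μ[fun ω => h (Z ω) | (MeasurableSpace.comap Z inferInstance)] :=
            condExp_add (hu_int.sub hv_int) hhint _
        _ =ᵐ[μ] (μ[fun ω => (ρ (Z ω))⁻¹ * (D ω * Yobs ω) | (MeasurableSpace.comap Z inferInstance)]
              - μ[fun ω => ((ρ (Z ω))⁻¹ * h (Z ω)) * D ω | (MeasurableSpace.comap Z inferInstance)]) + μ[fun ω => h (Z ω) | (MeasurableSpace.comap Z inferInstance)] :=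
            (condExp_sub hu_int hv_int _).add (Filter.EventuallyEq.refl _ _)
        _ =ᵐ[μ] fun ω => (ρ (Z ω))⁻¹ * (πstar (Z ω) * mstar (Z ω))
              - ((ρ (Z ω))⁻¹ * h (Z ω)) * πstar (Z ω) + h (Z ω) := by
            rw [hw]
            filter_upwards [hcd1, hcd2, hmstar, hπstar] with ω h1 h2 h3 h4
            simp only [Pi.add_apply, Pi.sub_apply]
            rw [h1, h2, ← h3, ← h4]
    refine h5.trans (Filter.Eventually.of_forall fun ω => ?_)
    simp only [div_eq_mul_inv]; ring
  -- signal 1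
  have hs1 : μ[fun ω => D ω * Yobs ω / πstar (Z ω) - (D ω / πstar (Z ω) - 1) * m (Z ω) | (MeasurableSpace.comap Z inferInstance)]
      =ᵐ[μ] q := by
    have h := hcomp πstar m hπstarmeas hmmeas
      (hoverlap.mono fun ω hω => ⟨le_of_lt hω.1, le_of_lt hω.2⟩) hmint
    refine h.trans ?_
    filter_upwards [hoverlap, hqm] with ω hov hqω
    have hne : πstar (Z ω) ≠ 0 := ne_of_gt (lt_trans hη0 hov.1)
    rw [← hqω]
    field_simp
    ring
  -- signal 2
  have hs2 : μ[fun ω => D ω * Yobs ω / π (Z ω) - (D ω / π (Z ω) - 1) * mstar (Z ω) | (MeasurableSpace.comap Z inferInstance)]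
      =ᵐ[μ] q := by
    have h := hcomp π mstar hπmeas hmstarmeas
      (Filter.Eventually.of_forall fun ω => hπbound (Z ω)) hmstarint
    refine h.trans ?_
    filter_upwards [hqm] with ω hqω
    have hne : π (Z ω) ≠ 0 := ne_of_gt (lt_of_lt_of_le hη0 (hπbound (Z ω)).1)
    rw [← hqω]
    field_simp
    ring
  -- tower property
  have tower : ∀ (sig : Ωs → ℝ), (μ[sig | (MeasurableSpace.comap Z inferInstance)] =ᵐ[μ] q) → μ[sig | (MeasurableSpace.comap (fun ω => f (Z ω)) inferInstance)] =ᵐ[μ] μ[Y1 | (MeasurableSpace.comap (fun ω => f (Z ω)) inferInstance)] := by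
    intro sig hsig
    calc μ[sig | (MeasurableSpace.comap (fun ω => f (Z ω)) inferInstance)] =ᵐ[μ] μ[μ[sig | (MeasurableSpace.comap Z inferInstance)] | (MeasurableSpace.comap (fun ω => f (Z ω)) inferInstance)] := (condExp_condExp_of_le hXZ hZle).symm
      _ =ᵐ[μ] μ[q | (MeasurableSpace.comap (fun ω => f (Z ω)) inferInstance)] := condExp_congr_ae hsig
      _ =ᵐ[μ] μ[Y1 | (MeasurableSpace.comap (fun ω => f (Z ω)) inferInstance)] := by rw [hqdef]; exact condExp_condExp_of_le hXZ hZle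
  exact ⟨tower _ hs1, tower _ hs2⟩
end
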